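/- Let ρ and σ be separable states on V⊗V (V = ℂ^d) of lengths l₁ and l₂ respectively. Then there exist a real number r with 0 ≤ r ≤ 1 and a separable state τ on V⊗V of length at most min(l₁, l₂) such that ρ⊙σ = r·τ. -/

import Mathlib

open scoped ComplexOrder Kronecker
open Matrix

/-- Square complex matrices of size `n`, i.e. operators on `V = ℂ^n`. -/
abbrev Mat (n : ℕ) := Matrix (Fin n) (Fin n) ℂ

/-- Operators on `V ⊗ V`, identified with matrices indexed by pairs. -/
abbrev Mat2 (n : ℕ) := Matrix (Fin n × Fin n) (Fin n × Fin n) ℂ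

/-- Linear maps on `L(V)`. -/
abbrev MapV (n : ℕ) := Mat n →ₗ[ℂ] Mat n

variable {n : ℕ}

/-- The Jamiołkowski isomorphism `J(Φ) = (Φ ⊗ id)(|ω⟩⟨ω|)`, `ω = Σ_α e_α ⊗ e_α`,
written out in matrix entries: `J(Φ)_{(a,b),(c,d)} = Φ(E_{bd})_{ac}`. -/
def Jmat (Φ : MapV n) : Mat2 n :=
  Matrix.of fun p q => Φ (Matrix.single p.2 q.2 1) p.1 q.1

/-- The inverse of the Jamiołkowski isomorphism. -/
noncomputable def Jinv (A : Mat2 n) : MapV n where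
  toFun ξ := Matrix.of fun α β => ∑ γ, ∑ δ, ξ γ δ * A (α, γ) (β, δ)
  map_add' x y := by
    ext α β
    simp [Matrix.add_apply, add_mul, Finset.sum_add_distrib]
  map_smul' c x := by
    ext α β
    simp [Matrix.smul_apply, smul_eq_mul, Finset.mul_sum, mul_assoc]

/-- The circled product `A ⊙ B = J(J⁻¹(A) ∘ J⁻¹(B))`. -/
noncomputable def odot (A B : Mat2 n) : Mat2 n := Jmat (Jinv A ∘ₗ Jinv B)

/-- Tensor product of vectors of `V`, as a vector of `V ⊗ V`. -/
def vecTens (u v : Fin n → ℂ) : Fin n × Fin n → ℂ := fun p => u p.1 * v p.2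

/-- The maximally entangled (unnormalized) vector `ω = Σ_α e_α ⊗ e_α`. -/
def omegaVec (n : ℕ) : Fin n × Fin n → ℂ := fun p => if p.1 = p.2 then 1 else 0

/-- `A` is `k`-block positive: `⟨Σ u_i⊗v_i, A (Σ u_i⊗v_i)⟩ ≥ 0` for all `u, v`. -/
def IsKBlockPos (k : ℕ) (A : Mat2 n) : Prop :=
  ∀ u v : Fin k → (Fin n → ℂ),
    0 ≤ star (∑ i, vecTens (u i) (v i)) ⬝ᵥ A.mulVec (∑ i, vecTens (u i) (v i))

/-- `A` is `k`-entangled: it lies in the convex hull of the operators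
`|w⟩⟨w|` with `w = Σ_{i=1}^k u_i ⊗ v_i`. -/
def IsKEntangled (k : ℕ) (A : Mat2 n) : Prop :=
  A ∈ convexHull ℝ {M : Mat2 n | ∃ u v : Fin k → (Fin n → ℂ),
    M = Matrix.vecMulVec (∑ i, vecTens (u i) (v i)) (star (∑ i, vecTens (u i) (v i)))}

/-- The map `Φ ⊗ id_k` on `L(V ⊗ ℂ^k)` (as a plain function on matrices). -/
def tensorIdFun (k : ℕ) (Φ : MapV n) (M : Matrix (Fin n × Fin k) (Fin n × Fin k) ℂ) :
    Matrix (Fin n × Fin k) (Fin n × Fin k) ℂ :=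
  Matrix.of fun p q => Φ (Matrix.of fun a b => M (a, p.2) (b, q.2)) p.1 q.1

/-- `Φ` is `k`-positive: `Φ ⊗ id_k` maps positive semidefinite operators on
`V ⊗ ℂ^k` to positive semidefinite operators. -/
def IsKPos (k : ℕ) (Φ : MapV n) : Prop :=
  ∀ M : Matrix (Fin n × Fin k) (Fin n × Fin k) ℂ, M.PosSemidef → (tensorIdFun k Φ M).PosSemidef

/-- `Φ` is completely positive: `k`-positive for every `k`. -/
def IsCompPos (Φ : MapV n) : Prop := ∀ k, IsKPos k Φ

/-- `Φ` is `k`-superpositive: `Φ(ξ) = Σ_i X_i^* ξ X_i` with all `rank X_i ≤ k`. -/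
def IsKSuperPos (k : ℕ) (Φ : MapV n) : Prop :=
  ∃ (m : ℕ) (X : Fin m → Mat n), (∀ i, (X i).rank ≤ k) ∧
    ∀ ξ, Φ ξ = ∑ i, (X i)ᴴ * ξ * X i

/-- The Hilbert–Schmidt inner product on `L(L(V))`:
`(Φ|Ψ) = Σ_{α,β} (Φ(E_{αβ}) | Ψ(E_{αβ}))` over the matrix-unit orthonormal basis. -/
noncomputable def hsInnerMap (Φ Ψ : MapV n) : ℂ :=
  ∑ α : Fin n, ∑ β : Fin n,
    ((Φ (Matrix.single α β 1))ᴴ * Ψ (Matrix.single α β 1)).trace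

/-- The Hilbert–Schmidt trace of a map `Θ` on `L(V)`:
`Tr Θ = Σ_{α,β} (E_{αβ} | Θ(E_{αβ}))`. -/
noncomputable def mapTrace (Θ : MapV n) : ℂ :=
  ∑ α : Fin n, ∑ β : Fin n,
    ((Matrix.single α β (1 : ℂ))ᴴ * Θ (Matrix.single α β 1)).trace

/-- The adjoint of a map `Φ` on `L(V)` with respect to the Hilbert–Schmidt
inner product `(A|B) = Tr(A^* B)`. -/
noncomputable def hsAdj (Φ : MapV n) : MapV n where
  toFun ξ := ∑ γ : Fin n, ∑ δ : Fin n,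
    (((Φ (Matrix.single γ δ 1))ᴴ * ξ).trace) • Matrix.single γ δ 1
  map_add' x y := by
    simp [Matrix.mul_add, Matrix.trace_add, add_smul, Finset.sum_add_distrib]
  map_smul' c x := by
    simp [Matrix.mul_smul, Matrix.trace_smul, smul_smul, Finset.smul_sum]

/-- `Φ` belongs to `J⁻¹(H(V⊗V))`, i.e. `J(Φ)` is Hermitian. -/
def InJinvH (Φ : MapV n) : Prop := (Jmat Φ).IsHermitian

/-- Dual cone of a set of Hermitian operators on `V ⊗ V`, inside `H(V⊗V)`. -/
def hermDual (S : Set (Mat2 n)) : Set (Mat2 n) :=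
  {B | B.IsHermitian ∧ ∀ A ∈ S, 0 ≤ (A * B).trace}

/-- Dual cone of a set of maps, inside `J⁻¹(H(V⊗V))`, with respect to the
Hilbert–Schmidt inner product of maps. -/
def mapDual (S : Set (MapV n)) : Set (MapV n) :=
  {Ψ | InJinvH Ψ ∧ ∀ Φ ∈ S, 0 ≤ hsInnerMap Φ Ψ}

/-- Operators on `ℂ^h ⊗ ℂ^d`. -/
abbrev MatH (h d : ℕ) := Matrix (Fin h × Fin d) (Fin h × Fin d) ℂ

/-- `ρ` is a state: positive semidefinite with trace one. -/
def IsState {h d : ℕ} (ρ : MatH h d) : Prop := ρ.PosSemidef ∧ ρ.trace = 1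

/-- `ρ` can be written as a sum of `l` tensor products of positive semidefinite
operators. -/
def HasSepLen (h d : ℕ) (ρ : MatH h d) (l : ℕ) : Prop :=
  ∃ (A : Fin l → Matrix (Fin h) (Fin h) ℂ) (B : Fin l → Matrix (Fin d) (Fin d) ℂ),
    (∀ i, (A i).PosSemidef) ∧ (∀ i, (B i).PosSemidef) ∧ ρ = ∑ i, A i ⊗ₖ B i

/-- `ρ` is separable: a convex combination of tensor products of states. -/
def IsSepState (h d : ℕ) (ρ : MatH h d) : Prop :=
  ∃ (l : ℕ) (p : Fin l → ℝ) (A : Fin l → Matrix (Fin h) (Fin h) ℂ)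
    (B : Fin l → Matrix (Fin d) (Fin d) ℂ),
    (∀ i, 0 < p i) ∧ (∑ i, p i = 1) ∧
    (∀ i, (A i).PosSemidef ∧ (A i).trace = 1) ∧
    (∀ i, (B i).PosSemidef ∧ (B i).trace = 1) ∧
    ρ = ∑ i, (p i : ℂ) • (A i ⊗ₖ B i)

/-- The length of a separable state: the least `l` such that `ρ` is a sum of `l`
tensor products of positive semidefinite operators. -/
noncomputable def sepLength (h d : ℕ) (ρ : MatH h d) : ℕ := sInf {l | HasSepLen h d ρ l}

/-- `ρ` is a sum of `r` tensor products of Hermitian operators. -/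
def HasHermDecomp (h d : ℕ) (ρ : MatH h d) (r : ℕ) : Prop :=
  ∃ (A : Fin r → Matrix (Fin h) (Fin h) ℂ) (B : Fin r → Matrix (Fin d) (Fin d) ℂ),
    (∀ i, (A i).IsHermitian) ∧ (∀ i, (B i).IsHermitian) ∧ ρ = ∑ i, A i ⊗ₖ B i

/-- The Schmidt rank of `ρ`: the least `r` such that `ρ` is a sum of `r` tensor
products of Hermitian operators. -/
noncomputable def schmidtRank (h d : ℕ) (ρ : MatH h d) : ℕ := sInf {r | HasHermDecomp h d ρ r}

/-- The block `(⟨υ|⊗id) A (|υ⟩⊗id)` of an operator `A` on `V ⊗ V`. -/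
noncomputable def blockFst (A : Mat2 n) (υ : Fin n → ℂ) : Mat n :=
  Matrix.of fun β δ => ∑ α, ∑ γ, star (υ α) * A (α, β) (γ, δ) * υ γ

/-- The block `(id⊗⟨u|) A (id⊗|u⟩)` of an operator `A` on `V ⊗ V`. -/
noncomputable def blockSnd (A : Mat2 n) (u : Fin n → ℂ) : Mat n :=
  Matrix.of fun α γ => ∑ β, ∑ δ, star (u β) * A (α, β) (γ, δ) * u δ

/-- Real square matrices indexed by pairs: operators on `X ⊗ X`, `X = ℝ^n`. -/
abbrev RMat2 (n : ℕ) := Matrix (Fin n × Fin n) (Fin n × Fin n) ℝ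

/-- The partial transposition `(id ⊗ t) A` on operators on `X ⊗ X`. -/
def ptrans (A : RMat2 n) : RMat2 n := Matrix.of fun p q => A (p.1, q.2) (q.1, p.2)

/-- The quartic polynomial `Σ_{a,b,c,d} A_{ab,cd} x^a y^b x^c y^d` associated to
an operator on `X ⊗ X`; `x`-variables are indexed by `Sum.inl`, `y`-variables
by `Sum.inr`. -/
noncomputable def quarticPoly (A : RMat2 n) : MvPolynomial (Fin n ⊕ Fin n) ℝ :=
  ∑ a, ∑ b, ∑ c, ∑ e, MvPolynomial.C (A (a, b) (c, e)) *
    MvPolynomial.X (Sum.inl a) * MvPolynomial.X (Sum.inr b) *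
    MvPolynomial.X (Sum.inl c) * MvPolynomial.X (Sum.inr e)


section Aux
set_option linter.unusedSectionVars false
variable {ι κ : Type*} [Fintype ι] [Fintype κ] [DecidableEq ι]

open scoped MatrixOrder in
lemma psd_eq_conjTranspose_mul_self {M : Matrix ι ι ℂ} (hM : M.PosSemidef) :
    ∃ X : Matrix ι ι ℂ, M = Xᴴ * X := by
  have h0 : 0 ≤ M := Matrix.nonneg_iff_posSemidef.mpr hM
  refine ⟨CFC.sqrt M, ?_⟩
  have hs : (CFC.sqrt M)ᴴ = CFC.sqrt M := (CFC.sqrt_nonneg M).isSelfAdjoint.star_eq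
  rw [hs, CFC.sqrt_mul_sqrt_self M h0]

lemma cre_of_nonneg {z : ℂ} (h : 0 ≤ z) : z = (z.re : ℂ) :=
  Complex.ext rfl (by simpa using (Complex.nonneg_iff.mp h).2.symm)

lemma cre_nonneg {z : ℂ} (h : 0 ≤ z) : 0 ≤ z.re := (Complex.nonneg_iff.mp h).1

lemma psd_smul {M : Matrix ι ι ℂ} (hM : M.PosSemidef) {c : ℝ} (hc : 0 ≤ c) :
    ((c : ℂ) • M).PosSemidef := by
  refine Matrix.PosSemidef.of_dotProduct_mulVec_nonneg ?_ ?_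
  · unfold Matrix.IsHermitian
    rw [Matrix.conjTranspose_smul, hM.1.eq]
    congr 1
    simp
  · intro x
    rw [Matrix.smul_mulVec, dotProduct_smul, smul_eq_mul]
    exact mul_nonneg (by exact_mod_cast hc) (hM.dotProduct_mulVec_nonneg x)

lemma psd_sum (f : κ → Matrix ι ι ℂ) (h : ∀ i, (f i).PosSemidef) :
    (∑ i, f i).PosSemidef := by
  classical
  exact Finset.sum_induction f _ (fun a b ha hb => ha.add hb) Matrix.PosSemidef.zero
    (fun i _ => h i)

lemma psd_trace_nonneg {M : Matrix ι ι ℂ} (hM : M.PosSemidef) : 0 ≤ M.trace := by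
  obtain ⟨X, rfl⟩ := psd_eq_conjTranspose_mul_self hM
  rw [Matrix.trace]
  refine Finset.sum_nonneg fun j _ => ?_
  simp only [Matrix.diag_apply, Matrix.mul_apply, Matrix.conjTranspose_apply]
  exact Finset.sum_nonneg fun i _ => star_mul_self_nonneg _

lemma psd_trace_eq_zero {M : Matrix ι ι ℂ} (hM : M.PosSemidef) (h : M.trace = 0) : M = 0 := by
  obtain ⟨X, rfl⟩ := psd_eq_conjTranspose_mul_self hM
  suffices hX : X = 0 by simp [hX]
  rw [Matrix.trace] at h
  have hdiag : ∀ j ∈ Finset.univ, (Xᴴ * X).diag j = 0 := by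
    refine (Finset.sum_eq_zero_iff_of_nonneg fun j _ => ?_).mp h
    simp only [Matrix.diag_apply, Matrix.mul_apply, Matrix.conjTranspose_apply]
    exact Finset.sum_nonneg fun i _ => star_mul_self_nonneg _
  ext i j
  have h2 := hdiag j (Finset.mem_univ j)
  simp only [Matrix.diag_apply, Matrix.mul_apply, Matrix.conjTranspose_apply] at h2
  have h3 := (Finset.sum_eq_zero_iff_of_nonneg fun i _ => star_mul_self_nonneg (X i j)).mp h2
    i (Finset.mem_univ i)
  have h4 : ((Complex.normSq (X i j) : ℂ)) = 0 := by
    rw [← Complex.mul_conj (X i j), mul_comm]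
    simpa [Complex.star_def] using h3
  have h5 : Complex.normSq (X i j) = 0 := by exact_mod_cast h4
  simpa [Matrix.zero_apply] using Complex.normSq_eq_zero.mp h5

end Aux


section Aux2
set_option linter.unusedSectionVars false
variable {ι κ : Type*} [Fintype ι] [Fintype κ] [DecidableEq ι] [DecidableEq κ]

lemma trace_cycle_helper {X Y : Matrix ι ι ℂ} :
    (Xᴴ * X * (Yᴴ * Y)).trace = ((Y * Xᴴ)ᴴ * (Y * Xᴴ)).trace := by
  rw [Matrix.conjTranspose_mul, Matrix.conjTranspose_conjTranspose]
  simp only [Matrix.mul_assoc]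
  rw [Matrix.trace_mul_comm Xᴴ]
  simp only [Matrix.mul_assoc]

lemma psd_trace_mul_nonneg {B C : Matrix ι ι ℂ} (hB : B.PosSemidef) (hC : C.PosSemidef) :
    0 ≤ (B * C).trace := by
  obtain ⟨X, rfl⟩ := psd_eq_conjTranspose_mul_self hB
  obtain ⟨Y, rfl⟩ := psd_eq_conjTranspose_mul_self hC
  rw [trace_cycle_helper]
  -- 0 ≤ trace of Mᴴ M
  rw [Matrix.trace]
  refine Finset.sum_nonneg fun j _ => ?_
  simp only [Matrix.diag_apply, Matrix.mul_apply, Matrix.conjTranspose_apply]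
  exact Finset.sum_nonneg fun i _ => star_mul_self_nonneg _

lemma trace_conjTranspose_mul_re (X : Matrix κ ι ℂ) :
    (Xᴴ * X).trace = ((∑ j, ∑ i, Complex.normSq (X i j) : ℝ) : ℂ) := by
  rw [Matrix.trace]
  push_cast
  refine Finset.sum_congr rfl fun j _ => ?_
  simp only [Matrix.diag_apply, Matrix.mul_apply, Matrix.conjTranspose_apply]
  refine Finset.sum_congr rfl fun i _ => ?_
  rw [Complex.star_def, mul_comm, Complex.mul_conj]

lemma psd_trace_mul_le {B C : Matrix ι ι ℂ} (hB : B.PosSemidef) (hC : C.PosSemidef) :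
    (B * C).trace.re ≤ B.trace.re * C.trace.re := by
  obtain ⟨X, rfl⟩ := psd_eq_conjTranspose_mul_self hB
  obtain ⟨Y, rfl⟩ := psd_eq_conjTranspose_mul_self hC
  rw [trace_cycle_helper, trace_conjTranspose_mul_re, trace_conjTranspose_mul_re,
    trace_conjTranspose_mul_re]
  simp only [Complex.ofReal_re]
  calc (∑ j, ∑ i, Complex.normSq ((Y * Xᴴ) i j))
      ≤ ∑ j, ∑ i, ((∑ k, Complex.normSq (Y i k)) * (∑ k, Complex.normSq (X j k))) := by
        refine Finset.sum_le_sum fun j _ => Finset.sum_le_sum fun i _ => ?_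
        have habs : ‖(Y * Xᴴ) i j‖
            ≤ ∑ k, ‖Y i k‖ * ‖X j k‖ := by
          rw [Matrix.mul_apply]
          refine (norm_sum_le _ _).trans ?_
          refine Finset.sum_le_sum fun k _ => ?_
          simp [Matrix.conjTranspose_apply]
        calc Complex.normSq ((Y * Xᴴ) i j) = ‖(Y * Xᴴ) i j‖ ^ 2 :=
              (Complex.sq_norm _).symm
          _ ≤ (∑ k, ‖Y i k‖ * ‖X j k‖) ^ 2 := by
              apply pow_le_pow_left₀ (norm_nonneg _) habs
          _ ≤ (∑ k, ‖Y i k‖ ^ 2) * (∑ k, ‖X j k‖ ^ 2) :=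
              Finset.sum_mul_sq_le_sq_mul_sq _ _ _
          _ = (∑ k, Complex.normSq (Y i k)) * (∑ k, Complex.normSq (X j k)) := by
              simp [Complex.sq_norm]
    _ = (∑ j, ∑ i, Complex.normSq (X i j)) * (∑ j, ∑ i, Complex.normSq (Y i j)) := by
        calc ∑ j : ι, ∑ i : ι, (∑ k, Complex.normSq (Y i k)) * (∑ k, Complex.normSq (X j k))
            = (∑ i : ι, ∑ k, Complex.normSq (Y i k)) * (∑ j : ι, ∑ k, Complex.normSq (X j k)) := by
              simp only [← Finset.sum_mul]
              rw [← Finset.mul_sum, mul_comm]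
          _ = (∑ j, ∑ i, Complex.normSq (X i j)) * (∑ j, ∑ i, Complex.normSq (Y i j)) := by
              rw [Finset.sum_comm (f := fun i k => Complex.normSq (Y i k)),
                Finset.sum_comm (f := fun j k => Complex.normSq (X j k))]
              rw [mul_comm]

lemma kron_conjTranspose {a b : ℕ} (A : Matrix (Fin a) (Fin a) ℂ) (B : Matrix (Fin b) (Fin b) ℂ) :
    (A ⊗ₖ B)ᴴ = Aᴴ ⊗ₖ Bᴴ := by
  ext ⟨i1, i2⟩ ⟨j1, j2⟩
  simp [Matrix.conjTranspose_apply, Matrix.kroneckerMap_apply]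

lemma psd_kron {a b : ℕ} {A : Matrix (Fin a) (Fin a) ℂ} {B : Matrix (Fin b) (Fin b) ℂ}
    (hA : A.PosSemidef) (hB : B.PosSemidef) : (A ⊗ₖ B).PosSemidef := by
  obtain ⟨X, rfl⟩ := psd_eq_conjTranspose_mul_self hA
  obtain ⟨Y, rfl⟩ := psd_eq_conjTranspose_mul_self hB
  rw [Matrix.mul_kronecker_mul, ← kron_conjTranspose]
  exact Matrix.posSemidef_conjTranspose_mul_self _

end Aux2

section OdotAux
set_option linter.unusedSectionVars false

lemma odot_apply {m : ℕ} (A B : Mat2 m) (p q : Fin m × Fin m) :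
    odot A B p q = ∑ γ, ∑ δ, B (γ, p.2) (δ, q.2) * A (p.1, γ) (q.1, δ) := by
  rcases p with ⟨p1, p2⟩; rcases q with ⟨q1, q2⟩
  simp only [odot, Jmat, Jinv, LinearMap.comp_apply, LinearMap.coe_mk, AddHom.coe_mk,
    Matrix.of_apply, Matrix.single, ite_mul, one_mul, zero_mul, ite_and]
  refine Finset.sum_congr rfl fun γ _ => Finset.sum_congr rfl fun δ _ => ?_
  congr 1
  simp

lemma sum_swap_pair {M : Type*} [AddCommMonoid M] {a b : ℕ} (g : Fin a → Fin b → M) :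
    ∑ i, ∑ j, g i j = ∑ j, ∑ i, g i j := Finset.sum_comm

lemma sum_swap4 {M : Type*} [AddCommMonoid M] {a b c e : ℕ}
    (f : Fin a → Fin b → Fin c → Fin e → M) :
    ∑ i, ∑ j, ∑ k, ∑ l, f i j k l = ∑ k, ∑ l, ∑ j, ∑ i, f i j k l :=
  calc ∑ i, ∑ j, ∑ k, ∑ l, f i j k l
      = ∑ i, ∑ k, ∑ j, ∑ l, f i j k l :=
        Finset.sum_congr rfl fun i _ => sum_swap_pair _
    _ = ∑ k, ∑ i, ∑ j, ∑ l, f i j k l := sum_swap_pair _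
    _ = ∑ k, ∑ i, ∑ l, ∑ j, f i j k l :=
        Finset.sum_congr rfl fun k _ => Finset.sum_congr rfl fun i _ => sum_swap_pair _
    _ = ∑ k, ∑ l, ∑ i, ∑ j, f i j k l :=
        Finset.sum_congr rfl fun k _ => sum_swap_pair _
    _ = ∑ k, ∑ l, ∑ j, ∑ i, f i j k l :=
        Finset.sum_congr rfl fun k _ => Finset.sum_congr rfl fun l _ => sum_swap_pair _

lemma odot_sum_kron {m k₁ k₂ : ℕ} (A B : Fin k₁ → Mat m) (C D : Fin k₂ → Mat m) :
    odot (∑ i, A i ⊗ₖ B i) (∑ j, C j ⊗ₖ D j)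
      = ∑ i, ∑ j, ((B i * (C j)ᵀ).trace) • (A i ⊗ₖ D j) := by
  ext ⟨p1, p2⟩ ⟨q1, q2⟩
  rw [odot_apply]
  simp only [Matrix.sum_apply, Matrix.smul_apply, Matrix.kroneckerMap_apply, smul_eq_mul,
    Matrix.trace, Matrix.diag_apply, Matrix.mul_apply, Matrix.transpose_apply,
    Finset.sum_mul, Finset.mul_sum]
  rw [sum_swap4 (f := fun i j γ δ => B i γ δ * C j γ δ * (A i p1 q1 * D j p2 q2))]
  refine Finset.sum_congr rfl fun γ _ => Finset.sum_congr rfl fun δ _ => ?_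
  rw [sum_swap_pair]
  refine Finset.sum_congr rfl fun j _ => Finset.sum_congr rfl fun i _ => ?_
  ring

end OdotAux

section GroupAux
set_option linter.unusedSectionVars false

lemma smul_sum_kron_group_fst {m k₁ k₂ : ℕ} (s : ℝ) (c : Fin k₁ → Fin k₂ → ℝ)
    (A : Fin k₁ → Mat m) (D : Fin k₂ → Mat m) :
    ((s : ℂ)) • (∑ i, ∑ j, ((c i j : ℝ) : ℂ) • (A i ⊗ₖ D j))
      = ∑ i, (A i) ⊗ₖ (∑ j, ((s * c i j : ℝ) : ℂ) • D j) := by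
  ext ⟨p1, p2⟩ ⟨q1, q2⟩
  simp only [Matrix.smul_apply, Matrix.sum_apply, Matrix.kroneckerMap_apply, smul_eq_mul,
    Finset.mul_sum]
  refine Finset.sum_congr rfl fun i _ => Finset.sum_congr rfl fun j _ => ?_
  push_cast
  ring

lemma smul_sum_kron_group_snd {m k₁ k₂ : ℕ} (s : ℝ) (c : Fin k₁ → Fin k₂ → ℝ)
    (A : Fin k₁ → Mat m) (D : Fin k₂ → Mat m) :
    ((s : ℂ)) • (∑ i, ∑ j, ((c i j : ℝ) : ℂ) • (A i ⊗ₖ D j))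
      = ∑ j, (∑ i, ((s * c i j : ℝ) : ℂ) • A i) ⊗ₖ D j := by
  ext ⟨p1, p2⟩ ⟨q1, q2⟩
  simp only [Matrix.smul_apply, Matrix.sum_apply, Matrix.kroneckerMap_apply, smul_eq_mul,
    Finset.mul_sum, Finset.sum_mul]
  rw [sum_swap_pair]
  refine Finset.sum_congr rfl fun j _ => Finset.sum_congr rfl fun i _ => ?_
  push_cast
  ring

lemma smul_sum_kron_flatten {m k₁ k₂ : ℕ} (s : ℝ) (c : Fin k₁ → Fin k₂ → ℝ)
    (A : Fin k₁ → Mat m) (D : Fin k₂ → Mat m) :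
    ((s : ℂ)) • (∑ i, ∑ j, ((c i j : ℝ) : ℂ) • (A i ⊗ₖ D j))
      = ∑ x : Fin k₁ × Fin k₂, ((s * c x.1 x.2 : ℝ) : ℂ) • (A x.1 ⊗ₖ D x.2) := by
  rw [Fintype.sum_prod_type, Finset.smul_sum]
  refine Finset.sum_congr rfl fun i _ => ?_
  rw [Finset.smul_sum]
  refine Finset.sum_congr rfl fun j _ => ?_
  rw [smul_smul]
  norm_cast

end GroupAux

section SepAux
set_option linter.unusedSectionVars false

lemma isSepState_of_decomp {h d : ℕ} (hh : 0 < h) (hd : 0 < d) {ι : Type*} [Fintype ι]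
    [DecidableEq ι] (τ : MatH h d) (c : ι → ℝ) (hc : ∀ i, 0 ≤ c i)
    (A : ι → Matrix (Fin h) (Fin h) ℂ) (hA : ∀ i, (A i).PosSemidef)
    (B : ι → Matrix (Fin d) (Fin d) ℂ) (hB : ∀ i, (B i).PosSemidef)
    (hτ : τ = ∑ i, (c i : ℂ) • (A i ⊗ₖ B i)) (htr : τ.trace = 1) :
    IsSepState h d τ := by
  classical
  set a : ι → ℝ := fun i => (A i).trace.re with ha_def
  set b : ι → ℝ := fun i => (B i).trace.re with hb_def
  have haA : ∀ i, (A i).trace = (a i : ℂ) := fun i => cre_of_nonneg (psd_trace_nonneg (hA i))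
  have hbB : ∀ i, (B i).trace = (b i : ℂ) := fun i => cre_of_nonneg (psd_trace_nonneg (hB i))
  have ha0 : ∀ i, 0 ≤ a i := fun i => cre_nonneg (psd_trace_nonneg (hA i))
  have hb0 : ∀ i, 0 ≤ b i := fun i => cre_nonneg (psd_trace_nonneg (hB i))
  set c' : ι → ℝ := fun i => c i * a i * b i with hc'_def
  have hc'0 : ∀ i, 0 ≤ c' i := fun i => mul_nonneg (mul_nonneg (hc i) (ha0 i)) (hb0 i)
  set A' : ι → Matrix (Fin h) (Fin h) ℂ := fun i =>
    if a i = 0 then (((h : ℝ)⁻¹ : ℝ) : ℂ) • (1 : Matrix (Fin h) (Fin h) ℂ)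
    else (((a i)⁻¹ : ℝ) : ℂ) • A i with hA'_def
  set B' : ι → Matrix (Fin d) (Fin d) ℂ := fun i =>
    if b i = 0 then (((d : ℝ)⁻¹ : ℝ) : ℂ) • (1 : Matrix (Fin d) (Fin d) ℂ)
    else (((b i)⁻¹ : ℝ) : ℂ) • B i with hB'_def
  have hA'state : ∀ i, (A' i).PosSemidef ∧ (A' i).trace = 1 := by
    intro i
    by_cases hai : a i = 0
    · simp only [hA'_def, if_pos hai]
      refine ⟨psd_smul Matrix.PosSemidef.one (by positivity), ?_⟩
      rw [Matrix.trace_smul, Matrix.trace_one]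
      rw [smul_eq_mul]
      push_cast
      rw [Fintype.card_fin]
      field_simp
    · simp only [hA'_def, if_neg hai]
      refine ⟨psd_smul (hA i) (inv_nonneg.mpr (ha0 i)), ?_⟩
      rw [Matrix.trace_smul, haA i, smul_eq_mul]
      push_cast
      field_simp
  have hB'state : ∀ i, (B' i).PosSemidef ∧ (B' i).trace = 1 := by
    intro i
    by_cases hbi : b i = 0
    · simp only [hB'_def, if_pos hbi]
      refine ⟨psd_smul Matrix.PosSemidef.one (by positivity), ?_⟩
      rw [Matrix.trace_smul, Matrix.trace_one]
      rw [smul_eq_mul]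
      push_cast
      rw [Fintype.card_fin]
      field_simp
    · simp only [hB'_def, if_neg hbi]
      refine ⟨psd_smul (hB i) (inv_nonneg.mpr (hb0 i)), ?_⟩
      rw [Matrix.trace_smul, hbB i, smul_eq_mul]
      push_cast
      field_simp
  have hterm : ∀ i, (c i : ℂ) • (A i ⊗ₖ B i) = (c' i : ℂ) • (A' i ⊗ₖ B' i) := by
    intro i
    by_cases hai : a i = 0
    · have hAz : A i = 0 := psd_trace_eq_zero (hA i) (by rw [haA i, hai]; simp)
      have : c' i = 0 := by simp [hc'_def, hai]
      simp [hAz, this, Matrix.zero_kronecker]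
    · by_cases hbi : b i = 0
      · have hBz : B i = 0 := psd_trace_eq_zero (hB i) (by rw [hbB i, hbi]; simp)
        have : c' i = 0 := by simp [hc'_def, hbi]
        simp [hBz, this, Matrix.kronecker_zero]
      · simp only [hA'_def, hB'_def, if_neg hai, if_neg hbi]
        rw [Matrix.smul_kronecker, Matrix.kronecker_smul, smul_smul, smul_smul]
        congr 1
        have hai' : ((a i : ℝ) : ℂ) ≠ 0 := by exact_mod_cast hai
        have hbi' : ((b i : ℝ) : ℂ) ≠ 0 := by exact_mod_cast hbi
        field_simp
        norm_cast
        simp only [hc'_def]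
        field_simp
  have hτ' : τ = ∑ i, (c' i : ℂ) • (A' i ⊗ₖ B' i) :=
    hτ.trans (Finset.sum_congr rfl fun i _ => hterm i)
  have hsum1 : ∑ i, c' i = 1 := by
    have htr' : τ.trace = ((∑ i, c' i : ℝ) : ℂ) := by
      rw [hτ', Matrix.trace_sum]
      push_cast
      refine Finset.sum_congr rfl fun i _ => ?_
      rw [Matrix.trace_smul, Matrix.trace_kronecker, (hA'state i).2, (hB'state i).2,
        smul_eq_mul]
      ring
    rw [htr] at htr'
    exact_mod_cast htr'.symm
  -- filter the nonzero coefficients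
  have hsum_s : ∑ i ∈ Finset.univ.filter (fun i => c' i ≠ 0), c' i = 1 := by
    rw [Finset.sum_filter_ne_zero, hsum1]
  set s : Finset ι := Finset.univ.filter (fun i => c' i ≠ 0) with hs_def
  set e := s.equivFin.symm with he_def
  refine ⟨s.card, fun j => c' (e j), fun j => A' (e j), fun j => B' (e j), ?_, ?_,
    fun j => hA'state _, fun j => hB'state _, ?_⟩
  · have key : ∀ i : ι, i ∈ s → 0 < c' i := by
      intro i hi
      rw [hs_def, Finset.mem_filter] at hi
      exact lt_of_le_of_ne (hc'0 _) (Ne.symm hi.2)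
    exact fun j => key _ (e j).2
  · calc ∑ j, c' (e j) = ∑ x : {x // x ∈ s}, c' x :=
        Fintype.sum_equiv e _ _ (fun j => rfl)
      _ = ∑ i ∈ s, c' i := by rw [← Finset.sum_coe_sort s (fun i => c' i)]
      _ = 1 := hsum_s
  · rw [hτ']
    have step1 : ∑ j, (c' (e j) : ℂ) • (A' (e j) ⊗ₖ B' (e j))
        = ∑ i ∈ s, (c' i : ℂ) • (A' i ⊗ₖ B' i) := by
      calc ∑ j, (c' (e j) : ℂ) • (A' (e j) ⊗ₖ B' (e j))
          = ∑ x : {x // x ∈ s}, (c' (x : ι) : ℂ) • (A' (x : ι) ⊗ₖ B' (x : ι)) :=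
            Fintype.sum_equiv e _ _ (fun j => rfl)
        _ = _ := Finset.sum_coe_sort s (fun i => (c' i : ℂ) • (A' i ⊗ₖ B' i))
    rw [step1]
    symm
    apply Finset.sum_subset (Finset.subset_univ s)
    intro i _ hni
    rw [hs_def, Finset.mem_filter, not_and] at hni
    have hz : c' i = 0 := by
      by_contra hne
      exact (hni (Finset.mem_univ i)) hne
    simp [hz]

end SepAux

section MainAux
set_option linter.unusedSectionVars false

lemma isSepState_hasSepLen {h d : ℕ} {ρ : MatH h d} (hs : IsSepState h d ρ) :
    ∃ l, HasSepLen h d ρ l := by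
  obtain ⟨l, p, A, B, hp, _, hA, hB, hρ⟩ := hs
  refine ⟨l, fun i => (p i : ℂ) • A i, B, fun i => psd_smul (hA i).1 (hp i).le,
    fun i => (hB i).1, ?_⟩
  rw [hρ]
  exact Finset.sum_congr rfl fun i _ => (Matrix.smul_kronecker _ _ _).symm

end MainAux


set_option maxHeartbeats 1000000 in
/-- if `ρ`, `σ` are separable states on `V ⊗ V` of lengths `l₁`,
`l₂`, then `ρ ⊙ σ = r • τ` for some `0 ≤ r ≤ 1` and some separable state `τ` of
length at most `min l₁ l₂`. -/
theorem stmt17 (d : ℕ) (hd : 0 < d) (ρ σ : Mat2 d) (l₁ l₂ : ℕ)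
    (hρ : IsState ρ) (hρsep : IsSepState d d ρ) (hl₁ : sepLength d d ρ = l₁)
    (hσ : IsState σ) (hσsep : IsSepState d d σ) (hl₂ : sepLength d d σ = l₂) :
    ∃ (r : ℝ) (τ : Mat2 d), 0 ≤ r ∧ r ≤ 1 ∧
      IsState τ ∧ IsSepState d d τ ∧ sepLength d d τ ≤ min l₁ l₂ ∧
      odot ρ σ = (r : ℂ) • τ := by
  classical
  have hne₁ : {l | HasSepLen d d ρ l}.Nonempty := isSepState_hasSepLen hρsep
  have hne₂ : {l | HasSepLen d d σ l}.Nonempty := isSepState_hasSepLen hσsep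
  have hmem₁ : HasSepLen d d ρ l₁ := hl₁ ▸ Nat.sInf_mem hne₁
  have hmem₂ : HasSepLen d d σ l₂ := hl₂ ▸ Nat.sInf_mem hne₂
  obtain ⟨A, B, hA, hB, hρd⟩ := hmem₁
  obtain ⟨C, D, hC, hD, hσd⟩ := hmem₂
  have hl₁pos : 0 < l₁ := by
    rcases Nat.eq_zero_or_pos l₁ with h0 | h
    · exfalso
      subst h0
      have : ρ = 0 := by rw [hρd]; simp
      rw [this] at hρ
      simpa using hρ.2
    · exact h
  have hl₂pos : 0 < l₂ := by
    rcases Nat.eq_zero_or_pos l₂ with h0 | h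
    · exfalso
      subst h0
      have : σ = 0 := by rw [hσd]; simp
      rw [this] at hσ
      simpa using hσ.2
    · exact h
  set t : Fin l₁ → Fin l₂ → ℝ := fun i j => ((B i * (C j)ᵀ).trace).re with ht_def
  have htc : ∀ i j, (B i * (C j)ᵀ).trace = ((t i j : ℝ) : ℂ) := fun i j =>
    cre_of_nonneg (psd_trace_mul_nonneg (hB i) ((hC j).transpose))
  have ht0 : ∀ i j, 0 ≤ t i j := fun i j =>
    cre_nonneg (psd_trace_mul_nonneg (hB i) ((hC j).transpose))
  have hS : odot ρ σ = ∑ i, ∑ j, ((t i j : ℝ) : ℂ) • (A i ⊗ₖ D j) := by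
    rw [hρd, hσd, odot_sum_kron]
    exact Finset.sum_congr rfl fun i _ => Finset.sum_congr rfl fun j _ => by rw [htc]
  set a : Fin l₁ → ℝ := fun i => (A i).trace.re with ha_def
  set b : Fin l₁ → ℝ := fun i => (B i).trace.re with hb_def
  set cc : Fin l₂ → ℝ := fun j => (C j).trace.re with hcc_def
  set ee : Fin l₂ → ℝ := fun j => (D j).trace.re with hee_def
  have haA : ∀ i, (A i).trace = ((a i : ℝ) : ℂ) := fun i =>
    cre_of_nonneg (psd_trace_nonneg (hA i))
  have hbB : ∀ i, (B i).trace = ((b i : ℝ) : ℂ) := fun i =>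
    cre_of_nonneg (psd_trace_nonneg (hB i))
  have hcC : ∀ j, (C j).trace = ((cc j : ℝ) : ℂ) := fun j =>
    cre_of_nonneg (psd_trace_nonneg (hC j))
  have heD : ∀ j, (D j).trace = ((ee j : ℝ) : ℂ) := fun j =>
    cre_of_nonneg (psd_trace_nonneg (hD j))
  have ha0 : ∀ i, 0 ≤ a i := fun i => cre_nonneg (psd_trace_nonneg (hA i))
  have hb0 : ∀ i, 0 ≤ b i := fun i => cre_nonneg (psd_trace_nonneg (hB i))
  have hc0 : ∀ j, 0 ≤ cc j := fun j => cre_nonneg (psd_trace_nonneg (hC j))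
  have he0 : ∀ j, 0 ≤ ee j := fun j => cre_nonneg (psd_trace_nonneg (hD j))
  set r : ℝ := ∑ i, ∑ j, t i j * (a i * ee j) with hr_def
  have hr0 : 0 ≤ r := by
    rw [hr_def]
    exact Finset.sum_nonneg fun i _ => Finset.sum_nonneg fun j _ =>
      mul_nonneg (ht0 i j) (mul_nonneg (ha0 i) (he0 j))
  have htrS : (odot ρ σ).trace = ((r : ℝ) : ℂ) := by
    rw [hS]
    simp only [Matrix.trace_sum, Matrix.trace_smul, Matrix.trace_kronecker, smul_eq_mul]
    rw [hr_def]
    push_cast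
    refine Finset.sum_congr rfl fun i _ => Finset.sum_congr rfl fun j _ => ?_
    rw [haA i, heD j]
  have hρtr : ∑ i, a i * b i = 1 := by
    have hh : ρ.trace = ((∑ i, a i * b i : ℝ) : ℂ) := by
      rw [hρd, Matrix.trace_sum]
      push_cast
      refine Finset.sum_congr rfl fun i _ => ?_
      rw [Matrix.trace_kronecker, haA i, hbB i]
    rw [hρ.2] at hh
    exact_mod_cast hh.symm
  have hσtr : ∑ j, cc j * ee j = 1 := by
    have hh : σ.trace = ((∑ j, cc j * ee j : ℝ) : ℂ) := by
      rw [hσd, Matrix.trace_sum]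
      push_cast
      refine Finset.sum_congr rfl fun j _ => ?_
      rw [Matrix.trace_kronecker, hcC j, heD j]
    rw [hσ.2] at hh
    exact_mod_cast hh.symm
  have hble : ∀ i j, t i j ≤ b i * cc j := by
    intro i j
    simp only [ht_def, hb_def, hcc_def]
    simpa [Matrix.trace_transpose] using psd_trace_mul_le (hB i) ((hC j).transpose)
  have hr1 : r ≤ 1 := by
    rw [hr_def]
    calc ∑ i, ∑ j, t i j * (a i * ee j)
        ≤ ∑ i, ∑ j, (b i * cc j) * (a i * ee j) := by
          refine Finset.sum_le_sum fun i _ => Finset.sum_le_sum fun j _ => ?_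
          exact mul_le_mul_of_nonneg_right (hble i j) (mul_nonneg (ha0 i) (he0 j))
      _ = (∑ i, a i * b i) * (∑ j, cc j * ee j) := by
          rw [Finset.sum_mul_sum]
          refine Finset.sum_congr rfl fun i _ => Finset.sum_congr rfl fun j _ => ?_
          ring
      _ = 1 := by rw [hρtr, hσtr, mul_one]
  have hSpsd : (odot ρ σ).PosSemidef := by
    rw [hS]
    exact psd_sum _ fun i => psd_sum _ fun j => psd_smul (psd_kron (hA i) (hD j)) (ht0 i j)
  rcases eq_or_lt_of_le hr0 with hrz | hrpos
  · -- r = 0 : the product is zero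
    have hsum0 : ∑ i, ∑ j, t i j * (a i * ee j) = 0 := by rw [← hr_def, ← hrz]
    have hz : ∀ i j, t i j * (a i * ee j) = 0 := by
      have h1 := (Finset.sum_eq_zero_iff_of_nonneg (fun i _ =>
        Finset.sum_nonneg fun j _ =>
          mul_nonneg (ht0 i j) (mul_nonneg (ha0 i) (he0 j)))).mp hsum0
      intro i j
      exact (Finset.sum_eq_zero_iff_of_nonneg (fun j _ =>
        mul_nonneg (ht0 i j) (mul_nonneg (ha0 i) (he0 j)))).mp
        (h1 i (Finset.mem_univ i)) j (Finset.mem_univ j)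
    have hSz : odot ρ σ = 0 := by
      rw [hS]
      refine Finset.sum_eq_zero fun i _ => Finset.sum_eq_zero fun j _ => ?_
      rcases mul_eq_zero.mp (hz i j) with h1 | h2
      · rw [h1]; simp
      · rcases mul_eq_zero.mp h2 with h3 | h4
        · have hAz : A i = 0 := psd_trace_eq_zero (hA i) (by rw [haA i, h3]; simp)
          rw [hAz]
          simp [Matrix.zero_kronecker]
        · have hDz : D j = 0 := psd_trace_eq_zero (hD j) (by rw [heD j, h4]; simp)
          rw [hDz]
          simp [Matrix.kronecker_zero]
    set A₀ : Mat d := (((d : ℝ)⁻¹ : ℝ) : ℂ) • (1 : Mat d) with hA₀_def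
    have hA₀psd : A₀.PosSemidef := psd_smul Matrix.PosSemidef.one (by positivity)
    have hA₀tr : A₀.trace = 1 := by
      rw [hA₀_def, Matrix.trace_smul, Matrix.trace_one, smul_eq_mul]
      push_cast
      rw [Fintype.card_fin]
      field_simp
    set τ₀ : Mat2 d := A₀ ⊗ₖ A₀ with hτ₀_def
    have hτ₀tr : τ₀.trace = 1 := by
      rw [hτ₀_def, Matrix.trace_kronecker, hA₀tr, mul_one]
    have hτ₀state : IsState τ₀ := ⟨psd_kron hA₀psd hA₀psd, hτ₀tr⟩
    have hτ₀sep : IsSepState d d τ₀ := by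
      refine isSepState_of_decomp hd hd τ₀ (fun _ : Fin 1 => 1) (fun _ => zero_le_one)
        (fun _ => A₀) (fun _ => hA₀psd) (fun _ => A₀) (fun _ => hA₀psd) ?_ hτ₀tr
      simp [hτ₀_def]
    have hτ₀len : HasSepLen d d τ₀ 1 :=
      ⟨fun _ => A₀, fun _ => A₀, fun _ => hA₀psd, fun _ => hA₀psd, by simp [hτ₀_def]⟩
    refine ⟨0, τ₀, le_refl 0, zero_le_one, hτ₀state, hτ₀sep, ?_, ?_⟩
    · exact le_min (le_trans (Nat.sInf_le hτ₀len) hl₁pos) (le_trans (Nat.sInf_le hτ₀len) hl₂pos)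
    · rw [hSz]
      simp
  · -- r > 0
    set τ : Mat2 d := ((r⁻¹ : ℝ) : ℂ) • (odot ρ σ) with hτ_def
    have hτflat : τ = ∑ x : Fin l₁ × Fin l₂, ((r⁻¹ * t x.1 x.2 : ℝ) : ℂ) • (A x.1 ⊗ₖ D x.2) := by
      rw [hτ_def, hS, smul_sum_kron_flatten]
    have hτgrp1 : τ = ∑ i, A i ⊗ₖ (∑ j, ((r⁻¹ * t i j : ℝ) : ℂ) • D j) := by
      rw [hτ_def, hS, smul_sum_kron_group_fst]
    have hτgrp2 : τ = ∑ j, (∑ i, ((r⁻¹ * t i j : ℝ) : ℂ) • A i) ⊗ₖ D j := by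
      rw [hτ_def, hS, smul_sum_kron_group_snd]
    have hτtr : τ.trace = 1 := by
      rw [hτ_def, Matrix.trace_smul, htrS, smul_eq_mul, ← Complex.ofReal_mul,
        inv_mul_cancel₀ hrpos.ne', Complex.ofReal_one]
    have hτstate : IsState τ := ⟨psd_smul hSpsd (inv_nonneg.mpr hr0), hτtr⟩
    have hτsep : IsSepState d d τ := by
      refine isSepState_of_decomp (ι := Fin l₁ × Fin l₂) hd hd τ (fun x => r⁻¹ * t x.1 x.2) ?_
        (fun x => A x.1) ?_ (fun x => D x.2) ?_ ?_ hτtr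
      · exact fun x => mul_nonneg (inv_nonneg.mpr hr0) (ht0 x.1 x.2)
      · exact fun x => hA x.1
      · exact fun x => hD x.2
      · exact hτflat
    have hlen1 : HasSepLen d d τ l₁ :=
      ⟨A, fun i => ∑ j, ((r⁻¹ * t i j : ℝ) : ℂ) • D j, hA,
        fun i => psd_sum _ fun j => psd_smul (hD j) (mul_nonneg (inv_nonneg.mpr hr0) (ht0 i j)),
        hτgrp1⟩
    have hlen2 : HasSepLen d d τ l₂ :=
      ⟨fun j => ∑ i, ((r⁻¹ * t i j : ℝ) : ℂ) • A i, D,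
        fun j => psd_sum _ fun i => psd_smul (hA i) (mul_nonneg (inv_nonneg.mpr hr0) (ht0 i j)),
        hD, hτgrp2⟩
    refine ⟨r, τ, hr0, hr1, hτstate, hτsep,
      le_min (Nat.sInf_le hlen1) (Nat.sInf_le hlen2), ?_⟩
    rw [hτ_def, smul_smul, ← Complex.ofReal_mul, mul_inv_cancel₀ hrpos.ne',
      Complex.ofReal_one, one_smul]
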